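/- Let M₁ ⊂ ℝᴺ and M₂ ⊂ ℝᴺ be compact C¹ submanifolds of dimensions n₁, n₂ ≥ 1 forming a totally skew pair. Then the map f : M₁ × M₂ → S^(N−1), f(x,y) = (x−y)/‖x−y‖, is well-defined and has everywhere injective differential; in particular N − 1 ≥ n₁ + n₂. -/

import Mathlib

/-- `M` is an `n`-dimensional C¹ submanifold of `ℝᴺ` with tangent-direction assignment
`T` (the tangent space at `x ∈ M`, translated to the origin, is `T x`): near each of
its points, `M` is the image of an injective C¹ parametrization from an open subset of
`ℝⁿ` whose differential has range the assigned tangent direction. -/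
def IsC1Submanifold {N : ℕ} (n : ℕ) (M : Set (EuclideanSpace ℝ (Fin N)))
    (T : EuclideanSpace ℝ (Fin N) → Submodule ℝ (EuclideanSpace ℝ (Fin N))) : Prop :=
  ∀ x ∈ M, Module.finrank ℝ (T x) = n ∧
    ∃ (U : Set (EuclideanSpace ℝ (Fin N)))
      (φ : EuclideanSpace ℝ (Fin n) → EuclideanSpace ℝ (Fin N))
      (V : Set (EuclideanSpace ℝ (Fin n))) (u : EuclideanSpace ℝ (Fin n)),
        IsOpen U ∧ x ∈ U ∧ IsOpen V ∧ u ∈ V ∧ φ u = x ∧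
        ContDiffOn ℝ 1 φ V ∧ Set.InjOn φ V ∧ φ '' V = M ∩ U ∧
        ∀ v ∈ V, LinearMap.range (fderiv ℝ φ v : EuclideanSpace ℝ (Fin n) →ₗ[ℝ] EuclideanSpace ℝ (Fin N)) = T (φ v)

/-- `M₁` and `M₂` (with tangent assignments `T₁`, `T₂`) form a totally skew pair:
for all `x ∈ M₁`, `y ∈ M₂` the affine tangent spaces are disjoint and their
direction spaces meet only in `0`. -/
def TotallySkewPair {N : ℕ} (M₁ M₂ : Set (EuclideanSpace ℝ (Fin N)))
    (T₁ T₂ : EuclideanSpace ℝ (Fin N) → Submodule ℝ (EuclideanSpace ℝ (Fin N))) : Prop :=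
  ∀ x ∈ M₁, ∀ y ∈ M₂,
    (T₁ x ⊓ T₂ y = ⊥) ∧ (∀ u ∈ T₁ x, ∀ w ∈ T₂ y, x + u ≠ y + w)

/-- The normalization map `z ↦ ‖z‖⁻¹ • z` is differentiable away from `0`. -/
lemma gauss_diff_aux {N : ℕ} (z : EuclideanSpace ℝ (Fin N)) (hz : z ≠ 0) :
    DifferentiableAt ℝ (fun y : EuclideanSpace ℝ (Fin N) => ‖y‖⁻¹ • y) z :=
  ((differentiableAt_id.norm ℝ hz).inv (norm_ne_zero_iff.mpr hz)).smul differentiableAt_id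

/-- If the derivative of the normalization map kills `h`, then `h ∈ span z`. -/
lemma gauss_key {N : ℕ} (z : EuclideanSpace ℝ (Fin N)) (hz : z ≠ 0)
    (h : EuclideanSpace ℝ (Fin N))
    (hh : fderiv ℝ (fun z : EuclideanSpace ℝ (Fin N) => ‖z‖⁻¹ • z) z h = 0) :
    ∃ c : ℝ, h = c • z := by
  have hnz : ‖z‖ ≠ 0 := norm_ne_zero_iff.mpr hz
  have dn : DifferentiableAt ℝ (fun y : EuclideanSpace ℝ (Fin N) => ‖y‖) z :=
    differentiableAt_id.norm ℝ hz
  have dg := gauss_diff_aux z hz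
  -- the product `‖y‖ • (‖y‖⁻¹ • y)` is the identity
  have hid : (fun y : EuclideanSpace ℝ (Fin N) => ‖y‖ • (‖y‖⁻¹ • y)) = id := by
    funext y
    by_cases hy : y = 0
    · simp [hy]
    · have : ‖y‖ ≠ 0 := norm_ne_zero_iff.mpr hy
      simp [smul_smul, mul_inv_cancel₀ this]
  have hprod : HasFDerivAt (fun y : EuclideanSpace ℝ (Fin N) => ‖y‖ • (‖y‖⁻¹ • y))
      (‖z‖ • (fderiv ℝ (fun y : EuclideanSpace ℝ (Fin N) => ‖y‖⁻¹ • y) z)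
        + (fderiv ℝ (fun y : EuclideanSpace ℝ (Fin N) => ‖y‖) z).smulRight (‖z‖⁻¹ • z)) z :=
    dn.hasFDerivAt.smul dg.hasFDerivAt
  rw [hid] at hprod
  have hD := hprod.unique (hasFDerivAt_id z)
  have := congrArg (fun (L : EuclideanSpace ℝ (Fin N) →L[ℝ] EuclideanSpace ℝ (Fin N)) => L h) hD
  simp only [ContinuousLinearMap.add_apply, ContinuousLinearMap.smul_apply,
    ContinuousLinearMap.smulRight_apply, ContinuousLinearMap.id_apply, hh, smul_zero,
    zero_add] at this
  rw [smul_smul] at this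
  exact ⟨_, this.symm⟩

/-- The derivative of the Gauss map factors through the difference map. -/
lemma gauss_fderiv_comp {N : ℕ} (x y : EuclideanSpace ℝ (Fin N)) (hxy : x ≠ y)
    (v w : EuclideanSpace ℝ (Fin N)) :
    fderiv ℝ (fun p : EuclideanSpace ℝ (Fin N) × EuclideanSpace ℝ (Fin N) =>
        ‖p.1 - p.2‖⁻¹ • (p.1 - p.2)) (x, y) (v, w)
      = fderiv ℝ (fun z : EuclideanSpace ℝ (Fin N) => ‖z‖⁻¹ • z) (x - y) (v - w) := by
  have hz : x - y ≠ 0 := sub_ne_zero.mpr hxy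
  have hg := (gauss_diff_aux (x - y) hz).hasFDerivAt
  have hs : HasFDerivAt
      (fun p : EuclideanSpace ℝ (Fin N) × EuclideanSpace ℝ (Fin N) => p.1 - p.2)
      (ContinuousLinearMap.fst ℝ (EuclideanSpace ℝ (Fin N)) (EuclideanSpace ℝ (Fin N))
        - ContinuousLinearMap.snd ℝ (EuclideanSpace ℝ (Fin N)) (EuclideanSpace ℝ (Fin N)))
      (x, y) := hasFDerivAt_fst.sub hasFDerivAt_snd
  have hcomp : HasFDerivAt
      (fun p : EuclideanSpace ℝ (Fin N) × EuclideanSpace ℝ (Fin N) =>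
        ‖p.1 - p.2‖⁻¹ • (p.1 - p.2))
      ((fderiv ℝ (fun z : EuclideanSpace ℝ (Fin N) => ‖z‖⁻¹ • z) (x - y)).comp
        (ContinuousLinearMap.fst ℝ (EuclideanSpace ℝ (Fin N)) (EuclideanSpace ℝ (Fin N))
          - ContinuousLinearMap.snd ℝ (EuclideanSpace ℝ (Fin N)) (EuclideanSpace ℝ (Fin N))))
      (x, y) := by
    have := hg.comp (x, y) hs
    exact this
  rw [hcomp.fderiv]
  simp [ContinuousLinearMap.comp_apply, ContinuousLinearMap.sub_apply]

/-- If `M₁, M₂ ⊂ ℝᴺ` are compact C¹ submanifolds of dimensions `n₁, n₂ ≥ 1` forming a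
totally skew pair, then the Gauss map `f(x,y) = (x−y)/‖x−y‖` is well defined
(`x ≠ y` for `x ∈ M₁`, `y ∈ M₂`) and its differential — the derivative of
`(x,y) ↦ (x−y)/‖x−y‖` applied to pairs of tangent vectors — is everywhere injective;
in particular `N − 1 ≥ n₁ + n₂`. -/
theorem gauss_map_of_skew_pair_immersive (N n₁ n₂ : ℕ) (hn₁ : 1 ≤ n₁) (hn₂ : 1 ≤ n₂)
    (M₁ M₂ : Set (EuclideanSpace ℝ (Fin N)))
    (T₁ T₂ : EuclideanSpace ℝ (Fin N) → Submodule ℝ (EuclideanSpace ℝ (Fin N)))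
    (hM₁ : IsC1Submanifold n₁ M₁ T₁) (hM₂ : IsC1Submanifold n₂ M₂ T₂)
    (hc₁ : IsCompact M₁) (hc₂ : IsCompact M₂)
    (hne₁ : M₁.Nonempty) (hne₂ : M₂.Nonempty)
    (hskew : TotallySkewPair M₁ M₂ T₁ T₂) :
    (∀ x ∈ M₁, ∀ y ∈ M₂, x ≠ y) ∧
    (∀ x ∈ M₁, ∀ y ∈ M₂, ∀ v ∈ T₁ x, ∀ w ∈ T₂ y,
      fderiv ℝ (fun p : EuclideanSpace ℝ (Fin N) × EuclideanSpace ℝ (Fin N) =>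
          ‖p.1 - p.2‖⁻¹ • (p.1 - p.2)) (x, y) (v, w) = 0 → v = 0 ∧ w = 0) ∧
    N - 1 ≥ n₁ + n₂ := by
  have hne : ∀ x ∈ M₁, ∀ y ∈ M₂, x ≠ y := by
    intro x hx y hy hxy
    exact (hskew x hx y hy).2 0 (zero_mem _) 0 (zero_mem _) (by simp [hxy])
  refine ⟨hne, ?_, ?_⟩
  · intro x hx y hy v hv w hw hD
    have hxy := hne x hx y hy
    rw [gauss_fderiv_comp x y hxy v w] at hD
    obtain ⟨c, hc⟩ := gauss_key (x - y) (sub_ne_zero.mpr hxy) (v - w) hD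
    rcases eq_or_ne c 0 with rfl | hc0
    · have hvw : v = w := by
        have h0 : v - w = 0 := by simpa using hc
        exact sub_eq_zero.mp h0
      subst hvw
      have : v ∈ T₁ x ⊓ T₂ y := ⟨hv, hw⟩
      rw [(hskew x hx y hy).1] at this
      have : v = 0 := this
      exact ⟨this, this⟩
    · exfalso
      have hmem : x + (-c⁻¹ • v) = y + (-c⁻¹ • w) := by
        have : v - w = c • (x - y) := hc
        have h2 : c⁻¹ • (v - w) = x - y := by
          rw [this, smul_smul, inv_mul_cancel₀ hc0, one_smul]
        have h3 : x + (-c⁻¹ • v) - (y + (-c⁻¹ • w)) = (x - y) - c⁻¹ • (v - w) := by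
          module
        have h4 : x + (-c⁻¹ • v) - (y + (-c⁻¹ • w)) = 0 := by
          rw [h3, h2, sub_self]
        exact sub_eq_zero.mp h4
      exact (hskew x hx y hy).2 _ ((T₁ x).smul_mem _ hv) _ ((T₂ y).smul_mem _ hw) hmem
  · obtain ⟨x, hx⟩ := hne₁
    obtain ⟨y, hy⟩ := hne₂
    have h1 := (hM₁ x hx).1
    have h2 := (hM₂ y hy).1
    obtain ⟨hinf, haff⟩ := hskew x hx y hy
    set z := x - y with hzdef
    have hz : z ≠ 0 := sub_ne_zero.mpr (hne x hx y hy)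
    set W := T₁ x ⊔ T₂ y with hW
    have hWrank : Module.finrank ℝ W = n₁ + n₂ := by
      have := Submodule.finrank_sup_add_finrank_inf_eq (T₁ x) (T₂ y)
      rw [hinf] at this
      simp only [finrank_bot, add_zero] at this
      rw [hW, this, h1, h2]
    have hzW : z ∉ W := by
      intro hzmem
      rw [hW, Submodule.mem_sup] at hzmem
      obtain ⟨u, hu, w, hw, huw⟩ := hzmem
      have huw' : u + w = x - y := huw.trans hzdef
      refine haff (-u) (neg_mem hu) w hw ?_
      have e : x + -u - (y + w) = (x - y) - (u + w) := by module
      rw [huw', sub_self] at e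
      exact sub_eq_zero.mp e
    have hinf2 : W ⊓ Submodule.span ℝ {z} = ⊥ := by
      rw [eq_bot_iff]
      rintro m ⟨hmW, hmz⟩
      obtain ⟨c, hc⟩ := Submodule.mem_span_singleton.mp hmz
      rcases eq_or_ne c 0 with rfl | hc0
      · simp [← hc]
      · exfalso
        rw [← hc] at hmW
        have : z ∈ W := by
          simpa [smul_smul, inv_mul_cancel₀ hc0] using W.smul_mem c⁻¹ hmW
        exact hzW this
    have hrank3 : Module.finrank ℝ ↥(W ⊔ Submodule.span ℝ {z}) = n₁ + n₂ + 1 := by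
      have := Submodule.finrank_sup_add_finrank_inf_eq W (Submodule.span ℝ {z})
      rw [hinf2] at this
      simp only [finrank_bot, add_zero] at this
      rw [this, hWrank, finrank_span_singleton hz]
    have hle : n₁ + n₂ + 1 ≤ N := by
      rw [← hrank3]
      simpa using Submodule.finrank_le (W ⊔ Submodule.span ℝ {z})
    omega
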